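/- arXiv:2008.08685 — 2 statements merged into one kernel-verified Lean document; each statement's English description precedes it below -/
import Mathlib

section
/- Let S' ⊂ ℝ^d be a nonempty finite set with Fly Bloom Filter w ∈ {0,1}^m, fix a point x ∈ ℝ^d with FlyHash h(x), and let x_NN = argmin_{x' ∈ S'} ‖x − x'‖ for any fixed distance metric ‖·‖. Then the expectation over the random choice of the projection matrix M satisfies E_M[(wᵀh(x))/ρ] ≤ 1 − q(x, x_NN). (This is Lemma 1, parts (iv) and (vi); in fact E_M[(wᵀh(x))/ρ] ≤ 1 − q(x, x') for every x' ∈ S'.) -/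
open MeasureTheory ProbabilityTheory

noncomputable section

open scoped Classical

/-- Dot product of a binary vector `θ` with a real vector `x`. -/
def bdot {d : ℕ} (θ : Fin d → Bool) (x : Fin d → ℝ) : ℝ :=
  ∑ i, if θ i = true then x i else 0

/-- The set of binary vectors in `{0,1}^d` with exactly `s` ones. -/
def sparseSet (d s : ℕ) : Finset (Fin d → Bool) :=
  Finset.univ.filter fun θ => (Finset.univ.filter fun i => θ i = true).card = s

lemma sparseSet_nonempty {d s : ℕ} (h : s ≤ d) : (sparseSet d s).Nonempty := by
  obtain ⟨t, -, ht⟩ := Finset.exists_subset_card_eq (s := (Finset.univ : Finset (Fin d)))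
    (n := s) (by simpa using h)
  refine ⟨fun i => decide (i ∈ t), ?_⟩
  simp only [sparseSet, Finset.mem_filter, Finset.mem_univ, true_and]
  rw [← ht]
  congr 1
  ext i
  simp

/-- `Q`: the uniform distribution over `s`-sparse binary vectors in `{0,1}^d`. -/
def Q (d s : ℕ) (h : s ≤ d) : Measure (Fin d → Bool) :=
  (PMF.uniformOfFinset (sparseSet d s) (sparseSet_nonempty h)).toMeasure

/-- Distribution of the random projection matrix `M`: `m` i.i.d. rows drawn from `Q`. -/
def MQ (d s m : ℕ) (h : s ≤ d) : Measure (Fin m → Fin d → Bool) :=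
  Measure.pi fun _ => Q d s h

/-- The FBF score `wᵀh(x)`, where `w` is the Fly Bloom Filter of the finite set `S'`
(built from the matrix `M` with thresholds `τ`) and `h(x)` is the FlyHash of `x`. -/
def score {d m : ℕ} (τ : (Fin d → ℝ) → ℝ) (M : Fin m → Fin d → Bool)
    (S' : Finset (Fin d → ℝ)) (x : Fin d → ℝ) : ℝ :=
  (Finset.univ.filter fun j : Fin m =>
    (∀ x' ∈ S', bdot (M j) x' < τ x') ∧ τ x ≤ bdot (M j) x).card

/-- `q(x, x') = Pr_{θ∼Q}(θᵀx' ≥ τ_{x'} | θᵀx ≥ τ_x)`. -/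
def qprob {d : ℕ} (s : ℕ) (h : s ≤ d) (τ : (Fin d → ℝ) → ℝ) (x x' : Fin d → ℝ) : ℝ :=
  ((Q d s h)[|{θ | τ x ≤ bdot θ x}] {θ | τ x' ≤ bdot θ x'}).toReal

lemma Q_isProb {d s : ℕ} (h : s ≤ d) : IsProbabilityMeasure (Q d s h) := by
  unfold Q; infer_instance

lemma MQ_isProb {d s m : ℕ} (h : s ≤ d) : IsProbabilityMeasure (MQ d s m h) := by
  have := Q_isProb (d := d) (s := s) h
  unfold MQ; infer_instance

lemma MQ_eval {d s m : ℕ} (h : s ≤ d) (j : Fin m) (C : Set (Fin d → Bool)) :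
    MQ d s m h (Function.eval j ⁻¹' C) = Q d s h C := by
  have := Q_isProb (d := d) (s := s) h
  rw [MQ, Set.eval_preimage, Measure.pi_pi]
  rw [Finset.prod_eq_single j (fun i _ hij => by simp [Function.update_of_ne hij])
    (by simp)]
  simp

lemma score_eq_sum {d m : ℕ} (τ : (Fin d → ℝ) → ℝ) (M : Fin m → Fin d → Bool)
    (S' : Finset (Fin d → ℝ)) (x : Fin d → ℝ) :
    score τ M S' x = ∑ j : Fin m,
      ({θ : Fin d → Bool | (∀ x' ∈ S', bdot θ x' < τ x') ∧ τ x ≤ bdot θ x}.indicator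
        (fun _ => (1 : ℝ)) (M j)) := by
  rw [score, Finset.card_filter]
  push_cast
  refine Finset.sum_congr rfl fun j _ => ?_
  by_cases hj : (∀ x' ∈ S', bdot (M j) x' < τ x') ∧ τ x ≤ bdot (M j) x <;>
    simp [Set.indicator_apply, hj]

/-- Lemma 1, parts (iv) and (vi).
For the Fly Bloom Filter `w` of a nonempty finite set `S' ⊂ ℝ^d`, a point `x` with FlyHash
`h(x)`, and `x_NN` the nearest neighbor of `x` in `S'` under any fixed distance metric,
`E_M[(wᵀh(x))/ρ] ≤ 1 − q(x, x_NN)`; in fact `E_M[(wᵀh(x))/ρ] ≤ 1 − q(x, x')` for every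
`x' ∈ S'`. -/
theorem fbf_expected_score_upper_bound
    (d s m ρ : ℕ) (hs : 0 < s) (hsd : s ≤ d) (hρ : 0 < ρ) (hρm : ρ ≤ m)
    (τ : (Fin d → ℝ) → ℝ)
    (hτ : ∀ x : Fin d → ℝ, ((Q d s hsd) {θ | τ x ≤ bdot θ x}).toReal = (ρ : ℝ) / m)
    (S' : Finset (Fin d → ℝ)) (hS' : S'.Nonempty) (x : Fin d → ℝ)
    (dist' : (Fin d → ℝ) → (Fin d → ℝ) → ℝ)
    (xNN : Fin d → ℝ) (hmem : xNN ∈ S')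
    (hmin : ∀ x' ∈ S', dist' x xNN ≤ dist' x x') :
    (∫ M, score τ M S' x / ρ ∂(MQ d s m hsd)) ≤ 1 - qprob s hsd τ x xNN ∧
    ∀ x' ∈ S', (∫ M, score τ M S' x / ρ ∂(MQ d s m hsd)) ≤ 1 - qprob s hsd τ x x' := by
  have hQ := Q_isProb (d := d) (s := s) hsd
  have hMQ := MQ_isProb (d := d) (s := s) (m := m) hsd
  have hm : 0 < m := lt_of_lt_of_le hρ hρm
  set A : Set (Fin d → Bool) := {θ | τ x ≤ bdot θ x} with hA
  set C : Set (Fin d → Bool) :=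
    {θ : Fin d → Bool | (∀ x' ∈ S', bdot θ x' < τ x') ∧ τ x ≤ bdot θ x} with hC
  -- compute the integral
  have hint : (∫ M, score τ M S' x / ρ ∂(MQ d s m hsd))
      = (m : ℝ) * ((Q d s hsd) C).toReal / ρ := by
    have : (∫ M, score τ M S' x / ρ ∂(MQ d s m hsd))
        = (∫ M, score τ M S' x ∂(MQ d s m hsd)) / ρ := integral_div _ _
    rw [this]
    congr 1
    calc (∫ M, score τ M S' x ∂(MQ d s m hsd))
        = ∫ M, ∑ j : Fin m, (C.indicator (fun _ => (1 : ℝ)) (M j)) ∂(MQ d s m hsd) := by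
          refine integral_congr_ae (Filter.Eventually.of_forall fun M => ?_)
          exact score_eq_sum τ M S' x
      _ = ∑ j : Fin m, ∫ M, (C.indicator (fun _ => (1 : ℝ)) (M j)) ∂(MQ d s m hsd) := by
          exact integral_finset_sum _ fun j _ => .of_finite
      _ = ∑ j : Fin m, ((MQ d s m hsd) (Function.eval j ⁻¹' C)).toReal := by
          refine Finset.sum_congr rfl fun j _ => ?_
          rw [← measureReal_def, ← integral_indicator_one MeasurableSet.of_discrete]
          rfl
      _ = ∑ _j : Fin m, ((Q d s hsd) C).toReal := by
          refine Finset.sum_congr rfl fun j _ => ?_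
          rw [MQ_eval]
      _ = (m : ℝ) * ((Q d s hsd) C).toReal := by simp [mul_comm]
  -- the key bound for each x' ∈ S'
  have key : ∀ x' ∈ S',
      (∫ M, score τ M S' x / ρ ∂(MQ d s m hsd)) ≤ 1 - qprob s hsd τ x x' := by
    intro x' hx'
    set B : Set (Fin d → Bool) := {θ | τ x' ≤ bdot θ x'} with hB
    have hCsub : C ⊆ A \ B := by
      intro θ hθ
      exact ⟨hθ.2, fun hθB => absurd hθB (not_le.mpr (hθ.1 x' hx'))⟩
    have hsplit : ((Q d s hsd) (A ∩ B)).toReal + ((Q d s hsd) (A \ B)).toReal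
        = ((Q d s hsd) A).toReal := by
      rw [← ENNReal.toReal_add (measure_ne_top _ _) (measure_ne_top _ _),
        measure_inter_add_diff A MeasurableSet.of_discrete]
    have hApos : (0 : ℝ) < ((Q d s hsd) A).toReal := by
      rw [hτ x]
      positivity
    have hq : qprob s hsd τ x x'
        = ((Q d s hsd) (A ∩ B)).toReal / ((Q d s hsd) A).toReal := by
      rw [qprob, ProbabilityTheory.cond_apply MeasurableSet.of_discrete,
        ENNReal.toReal_mul, ENNReal.toReal_inv]
      rw [div_eq_inv_mul]
    have h1q : 1 - qprob s hsd τ x x'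
        = ((Q d s hsd) (A \ B)).toReal / ((Q d s hsd) A).toReal := by
      rw [hq, eq_div_iff hApos.ne', sub_mul, div_mul_cancel₀ _ hApos.ne', one_mul]
      linarith
    rw [hint, h1q, hτ x]
    have hmono : ((Q d s hsd) C).toReal ≤ ((Q d s hsd) (A \ B)).toReal :=
      ENNReal.toReal_mono (measure_ne_top _ _) (measure_mono hCsub)
    rw [div_div_eq_mul_div, mul_comm (m : ℝ)]
    gcongr
  exact ⟨key xNN hmem, key⟩
end
end

section
/- Let S^0, S^1 ⊂ ℝ^d be finite sets with Fly Bloom Filters w_0 and w_1 respectively, fix a point x ∈ ℝ^d with FlyHash h(x), pick any δ ∈ (0,1), and let μ = min{ E_M[(w_0ᵀh(x))/ρ], E_M[(w_1ᵀh(x))/ρ] }. If ρ·μ ≥ 12·ln(4/δ), then with probability at least 1 − δ over the random choice of the projection matrix M, both of the following hold: (1/2)·E_M[(w_1ᵀh(x))/ρ] ≤ (w_1ᵀh(x))/ρ ≤ (3/2)·E_M[(w_1ᵀh(x))/ρ], and (1/2)·E_M[(w_0ᵀh(x))/ρ] ≤ (w_0ᵀh(x))/ρ ≤ (3/2)·E_M[(w_0ᵀh(x))/ρ].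 -/
open MeasureTheory ProbabilityTheory

noncomputable section

open scoped Classical

instance instQProb (d s : ℕ) (h : s ≤ d) : IsProbabilityMeasure (Q d s h) :=
  PMF.toMeasure.isProbabilityMeasure _

instance instMQProb (d s m : ℕ) (h : s ≤ d) : IsProbabilityMeasure (MQ d s m h) := by
  unfold MQ; infer_instance

def cnt {d : ℕ} (m : ℕ) (A : Set (Fin d → Bool)) (M : Fin m → Fin d → Bool) : ℝ :=
  ((Finset.univ.filter fun j : Fin m => M j ∈ A).card : ℝ)

lemma cnt_eq_sum {d : ℕ} (m : ℕ) (A : Set (Fin d → Bool)) (M : Fin m → Fin d → Bool) :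
    cnt m A M = ∑ j : Fin m, if M j ∈ A then (1:ℝ) else 0 := by
  rw [cnt, Finset.card_filter]
  push_cast
  rfl

set_option synthInstance.maxHeartbeats 1000000 in
set_option maxHeartbeats 1000000 in
lemma integral_exp_cnt (d s m : ℕ) (hsd : s ≤ d) (A : Set (Fin d → Bool)) (t : ℝ) :
    ∫ M, Real.exp (t * cnt m A M) ∂(MQ d s m hsd)
      = (1 + ((Q d s hsd) A).toReal * (Real.exp t - 1)) ^ m := by
  letI : MeasureSpace (Fin d → Bool) := ⟨Q d s hsd⟩
  haveI : IsProbabilityMeasure (volume : Measure (Fin d → Bool)) := instQProb d s hsd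
  haveI : SigmaFinite (volume : Measure (Fin d → Bool)) :=
    @IsFiniteMeasure.toSigmaFinite _ _ _ inferInstance
  have hvol : MQ d s m hsd = (volume : Measure (Fin m → Fin d → Bool)) := by
    rw [MQ]; rfl
  have hfun : ∀ M : Fin m → Fin d → Bool, Real.exp (t * cnt m A M)
      = ∏ j : Fin m, Real.exp (t * (if M j ∈ A then (1:ℝ) else 0)) := by
    intro M
    rw [cnt_eq_sum, Finset.mul_sum, Real.exp_sum]
  have hg : ∫ θ, Real.exp (t * (if θ ∈ A then (1:ℝ) else 0)) ∂(Q d s hsd)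
      = 1 + ((Q d s hsd) A).toReal * (Real.exp t - 1) := by
    have : (fun θ : Fin d → Bool => Real.exp (t * (if θ ∈ A then (1:ℝ) else 0)))
        = fun θ => 1 + A.indicator (fun _ => Real.exp t - 1) θ := by
      funext θ
      by_cases h : θ ∈ A <;> simp [h, Set.indicator_of_mem, Set.indicator_of_notMem]
    rw [this, integral_add (integrable_const _) Integrable.of_finite,
      integral_const, integral_indicator_const _ (Set.toFinite A).measurableSet]
    simp [mul_comm, Measure.real]
  simp_rw [hfun, hvol]
  rw [← hvol, MQ, MeasureTheory.integral_fintype_prod_eq_pow (ι := Fin m)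
    (fun θ : Fin d → Bool => Real.exp (t * (if θ ∈ A then (1:ℝ) else 0))), Fintype.card_fin,
    hg]

lemma integral_cnt (d s m : ℕ) (hsd : s ≤ d) (A : Set (Fin d → Bool)) :
    ∫ M, cnt m A M ∂(MQ d s m hsd) = m * ((Q d s hsd) A).toReal := by
  have hpre : ∀ j : Fin m, (MQ d s m hsd) (Function.eval j ⁻¹' A) = (Q d s hsd) A := by
    intro j
    have hset : Function.eval j ⁻¹' A
        = Set.pi Set.univ (fun i => if i = j then A else Set.univ) := by
      ext M
      simp only [Set.mem_preimage, Set.mem_pi, Set.mem_univ, true_implies, Function.eval]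
      constructor
      · intro h i
        by_cases hij : i = j <;> simp [hij, h]
      · intro h
        have := h j
        simpa using this
    rw [hset, MQ, Measure.pi_pi]
    rw [Finset.prod_eq_single j (fun i _ hij => by simp [hij]) (by simp)]
    simp
  have hint : ∀ j : Fin m, ∫ M, (if M j ∈ A then (1:ℝ) else 0) ∂(MQ d s m hsd)
      = ((Q d s hsd) A).toReal := by
    intro j
    have : (fun M : Fin m → Fin d → Bool => if M j ∈ A then (1:ℝ) else 0)
        = (Function.eval j ⁻¹' A).indicator (fun _ => (1:ℝ)) := by
      funext M
      by_cases h : M j ∈ A <;> simp [h, Set.indicator, Function.eval]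
    rw [this, integral_indicator_const _ (Set.toFinite _).measurableSet, Measure.real, hpre j]
    simp
  simp_rw [cnt_eq_sum]
  rw [integral_finset_sum _ (fun j _ => Integrable.of_finite)]
  simp [hint, Finset.sum_const]

lemma mgf_cnt (d s m : ℕ) (hsd : s ≤ d) (A : Set (Fin d → Bool)) (t : ℝ) :
    mgf (cnt m A) (MQ d s m hsd) t
      = (1 + ((Q d s hsd) A).toReal * (Real.exp t - 1)) ^ m := by
  rw [mgf]; exact integral_exp_cnt d s m hsd A t

lemma p_le_one (d s : ℕ) (hsd : s ≤ d) (A : Set (Fin d → Bool)) :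
    ((Q d s hsd) A).toReal ≤ 1 := by
  have := prob_le_one (μ := Q d s hsd) (s := A)
  simpa using ENNReal.toReal_mono (by norm_num) this

lemma upper_tail (d s m : ℕ) (hsd : s ≤ d) (A : Set (Fin d → Bool)) :
    ((MQ d s m hsd) {M | (3:ℝ)/2 * (m * ((Q d s hsd) A).toReal) ≤ cnt m A M}).toReal
      ≤ Real.exp (-((m : ℝ) * ((Q d s hsd) A).toReal) / 12) := by
  set p := ((Q d s hsd) A).toReal with hp
  have hp0 : 0 ≤ p := ENNReal.toReal_nonneg
  have hp1 : p ≤ 1 := p_le_one d s hsd A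
  have hmp : 0 ≤ (m:ℝ) * p := by positivity
  have hsq : Real.exp (1/2) * Real.exp (1/2) = Real.exp 1 := by
    rw [← Real.exp_add]; norm_num
  have hE : Real.exp (1/2 : ℝ) ≤ 5/3 := by
    nlinarith [Real.exp_one_lt_d9, Real.exp_pos (1/2 : ℝ)]
  have hE1 : (1:ℝ) ≤ Real.exp (1/2 : ℝ) := Real.one_le_exp (by norm_num)
  have key := measure_ge_le_exp_mul_mgf (μ := MQ d s m hsd) (X := cnt m A)
    ((3:ℝ)/2 * (m * p)) (t := 1/2) (by norm_num) Integrable.of_finite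
  rw [mgf_cnt] at key
  refine key.trans ?_
  have hbase : 0 ≤ 1 + p * (Real.exp (1/2 : ℝ) - 1) := by nlinarith
  have hpow : (1 + p * (Real.exp (1/2 : ℝ) - 1)) ^ m
      ≤ Real.exp ((m:ℝ) * (p * (Real.exp (1/2 : ℝ) - 1))) := by
    rw [show ((m:ℝ) * (p * (Real.exp (1/2 : ℝ) - 1))) = (m : ℕ) * (p * (Real.exp (1/2:ℝ) - 1)) by push_cast; ring,
      Real.exp_nat_mul]
    exact pow_le_pow_left₀ hbase (by nlinarith [Real.add_one_le_exp (p * (Real.exp (1/2:ℝ) - 1))]) m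
  calc Real.exp (-(1/2) * ((3:ℝ)/2 * (m * p))) * (1 + p * (Real.exp (1/2:ℝ) - 1)) ^ m
      ≤ Real.exp (-(1/2) * ((3:ℝ)/2 * (m * p))) * Real.exp ((m:ℝ) * (p * (Real.exp (1/2:ℝ) - 1))) :=
        mul_le_mul_of_nonneg_left hpow (Real.exp_pos _).le
    _ = Real.exp (-(1/2) * ((3:ℝ)/2 * (m * p)) + (m:ℝ) * (p * (Real.exp (1/2:ℝ) - 1))) :=
        (Real.exp_add _ _).symm
    _ ≤ Real.exp (-((m:ℝ) * p) / 12) := by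
        apply Real.exp_le_exp.mpr
        nlinarith [mul_le_mul_of_nonneg_left hE hmp]

lemma lower_tail (d s m : ℕ) (hsd : s ≤ d) (A : Set (Fin d → Bool)) :
    ((MQ d s m hsd) {M | cnt m A M ≤ (1:ℝ)/2 * (m * ((Q d s hsd) A).toReal)}).toReal
      ≤ Real.exp (-((m : ℝ) * ((Q d s hsd) A).toReal) / 12) := by
  set p := ((Q d s hsd) A).toReal with hp
  have hp0 : 0 ≤ p := ENNReal.toReal_nonneg
  have hp1 : p ≤ 1 := p_le_one d s hsd A
  have hmp : 0 ≤ (m:ℝ) * p := by positivity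
  have hsq : Real.exp (1/2) * Real.exp (1/2) = Real.exp 1 := by
    rw [← Real.exp_add]; norm_num
  have hEgt : (3:ℝ)/2 ≤ Real.exp (1/2 : ℝ) := by
    nlinarith [Real.exp_one_gt_d9, Real.exp_pos (1/2 : ℝ)]
  have hE : Real.exp (-(1/2) : ℝ) ≤ 2/3 := by
    rw [Real.exp_neg]
    rw [inv_le_comm₀ (Real.exp_pos _) (by norm_num)]
    linarith
  have hE0 : (0:ℝ) < Real.exp (-(1/2) : ℝ) := Real.exp_pos _
  have key := measure_le_le_exp_mul_mgf (μ := MQ d s m hsd) (X := cnt m A)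
    ((1:ℝ)/2 * (m * p)) (t := -(1/2)) (by norm_num) Integrable.of_finite
  rw [mgf_cnt] at key
  refine key.trans ?_
  have hbase : 0 ≤ 1 + p * (Real.exp (-(1/2) : ℝ) - 1) := by nlinarith
  have hpow : (1 + p * (Real.exp (-(1/2) : ℝ) - 1)) ^ m
      ≤ Real.exp ((m:ℝ) * (p * (Real.exp (-(1/2) : ℝ) - 1))) := by
    rw [show ((m:ℝ) * (p * (Real.exp (-(1/2):ℝ) - 1))) = (m : ℕ) * (p * (Real.exp (-(1/2):ℝ) - 1)) by push_cast; ring,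
      Real.exp_nat_mul]
    exact pow_le_pow_left₀ hbase (by nlinarith [Real.add_one_le_exp (p * (Real.exp (-(1/2):ℝ) - 1))]) m
  calc Real.exp (-(-(1/2)) * ((1:ℝ)/2 * (m * p))) * (1 + p * (Real.exp (-(1/2):ℝ) - 1)) ^ m
      ≤ Real.exp (-(-(1/2)) * ((1:ℝ)/2 * (m * p))) * Real.exp ((m:ℝ) * (p * (Real.exp (-(1/2):ℝ) - 1))) :=
        mul_le_mul_of_nonneg_left hpow (Real.exp_pos _).le
    _ = Real.exp (-(-(1/2)) * ((1:ℝ)/2 * (m * p)) + (m:ℝ) * (p * (Real.exp (-(1/2):ℝ) - 1))) :=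
        (Real.exp_add _ _).symm
    _ ≤ Real.exp (-((m:ℝ) * p) / 12) := by
        apply Real.exp_le_exp.mpr
        nlinarith [mul_le_mul_of_nonneg_left hE hmp]

/-- concentration, Lemma S3 form.
If `ρ · μ ≥ 12 · ln(4/δ)` where `μ = min{E_M[(w_0ᵀh(x))/ρ], E_M[(w_1ᵀh(x))/ρ]}`, then with
probability at least `1 − δ` over `M`, both normalized scores are within a factor
`[1/2, 3/2]` of their expectations. -/
theorem fbf_score_concentration
    (d s m ρ : ℕ) (hs : 0 < s) (hsd : s ≤ d) (hρ : 0 < ρ) (hρm : ρ ≤ m)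
    (τ : (Fin d → ℝ) → ℝ)
    (hτ : ∀ x : Fin d → ℝ, ((Q d s hsd) {θ | τ x ≤ bdot θ x}).toReal = (ρ : ℝ) / m)
    (S0 S1 : Finset (Fin d → ℝ)) (x : Fin d → ℝ)
    (δ : ℝ) (hδ : δ ∈ Set.Ioo (0 : ℝ) 1)
    (hμ : 12 * Real.log (4 / δ) ≤ (ρ : ℝ) *
      min (∫ M, score τ M S0 x / ρ ∂(MQ d s m hsd))
          (∫ M, score τ M S1 x / ρ ∂(MQ d s m hsd))) :
    1 - δ ≤ ((MQ d s m hsd) {M |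
      ((1 : ℝ) / 2) * (∫ M', score τ M' S1 x / ρ ∂(MQ d s m hsd)) ≤ score τ M S1 x / ρ ∧
      score τ M S1 x / ρ ≤ ((3 : ℝ) / 2) * (∫ M', score τ M' S1 x / ρ ∂(MQ d s m hsd)) ∧
      ((1 : ℝ) / 2) * (∫ M', score τ M' S0 x / ρ ∂(MQ d s m hsd)) ≤ score τ M S0 x / ρ ∧
      score τ M S0 x / ρ ≤ ((3 : ℝ) / 2) * (∫ M', score τ M' S0 x / ρ ∂(MQ d s m hsd))}).toReal := by
  obtain ⟨hδ0, hδ1⟩ := hδ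
  have hρR : (0:ℝ) < ρ := by exact_mod_cast hρ
  set A0 : Set (Fin d → Bool) :=
    {θ | (∀ x' ∈ S0, bdot θ x' < τ x') ∧ τ x ≤ bdot θ x} with hA0
  set A1 : Set (Fin d → Bool) :=
    {θ | (∀ x' ∈ S1, bdot θ x' < τ x') ∧ τ x ≤ bdot θ x} with hA1
  have hsc0 : ∀ M : Fin m → Fin d → Bool, score τ M S0 x = cnt m A0 M := by
    intro M
    unfold score cnt
    norm_cast
    congr 1
    ext j
    simp only [Finset.mem_filter, Finset.mem_univ, true_and, hA0, Set.mem_setOf_eq]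
  have hsc1 : ∀ M : Fin m → Fin d → Bool, score τ M S1 x = cnt m A1 M := by
    intro M
    unfold score cnt
    norm_cast
    congr 1
    ext j
    simp only [Finset.mem_filter, Finset.mem_univ, true_and, hA1, Set.mem_setOf_eq]
  set p0 := ((Q d s hsd) A0).toReal with hp0
  set p1 := ((Q d s hsd) A1).toReal with hp1
  have hE0 : (∫ M, score τ M S0 x / ρ ∂(MQ d s m hsd)) = ((m:ℝ) * p0) / ρ := by
    simp only [hsc0]
    rw [integral_div, integral_cnt]
  have hE1 : (∫ M, score τ M S1 x / ρ ∂(MQ d s m hsd)) = ((m:ℝ) * p1) / ρ := by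
    simp only [hsc1]
    rw [integral_div, integral_cnt]
  rw [hE0, hE1] at hμ
  have hmineq : (ρ:ℝ) * min (((m:ℝ)*p0)/ρ) (((m:ℝ)*p1)/ρ) = min ((m:ℝ)*p0) ((m:ℝ)*p1) := by
    rw [mul_min_of_nonneg _ _ hρR.le, mul_div_cancel₀ _ hρR.ne', mul_div_cancel₀ _ hρR.ne']
  rw [hmineq] at hμ
  have h0 : 12 * Real.log (4/δ) ≤ (m:ℝ)*p0 := hμ.trans (min_le_left _ _)
  have h1 : 12 * Real.log (4/δ) ≤ (m:ℝ)*p1 := hμ.trans (min_le_right _ _)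
  have hexp : ∀ E : ℝ, 12 * Real.log (4/δ) ≤ E → Real.exp (-E/12) ≤ δ/4 := by
    intro E hE
    have h4δ : (0:ℝ) < 4/δ := by positivity
    calc Real.exp (-E/12) ≤ Real.exp (-Real.log (4/δ)) :=
          Real.exp_le_exp.mpr (by linarith)
      _ = δ/4 := by rw [Real.exp_neg, Real.exp_log h4δ, inv_div]
  have hdiv : ∀ a b : ℝ, a / ρ ≤ b / ρ ↔ a ≤ b := fun a b => by
    rw [div_le_div_iff₀ hρR hρR]
    exact mul_le_mul_iff_of_pos_right hρR
  have hGset : {M : Fin m → Fin d → Bool |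
      ((1 : ℝ) / 2) * (∫ M', score τ M' S1 x / ρ ∂(MQ d s m hsd)) ≤ score τ M S1 x / ρ ∧
      score τ M S1 x / ρ ≤ ((3 : ℝ) / 2) * (∫ M', score τ M' S1 x / ρ ∂(MQ d s m hsd)) ∧
      ((1 : ℝ) / 2) * (∫ M', score τ M' S0 x / ρ ∂(MQ d s m hsd)) ≤ score τ M S0 x / ρ ∧
      score τ M S0 x / ρ ≤ ((3 : ℝ) / 2) * (∫ M', score τ M' S0 x / ρ ∂(MQ d s m hsd))}
      = {M : Fin m → Fin d → Bool |
      (1:ℝ)/2 * ((m:ℝ)*p1) ≤ cnt m A1 M ∧ cnt m A1 M ≤ (3:ℝ)/2 * ((m:ℝ)*p1) ∧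
      (1:ℝ)/2 * ((m:ℝ)*p0) ≤ cnt m A0 M ∧ cnt m A0 M ≤ (3:ℝ)/2 * ((m:ℝ)*p0)} := by
    ext M
    simp only [Set.mem_setOf_eq, hE0, hE1]
    simp only [hsc0, hsc1]
    rw [show (1:ℝ)/2 * (((m:ℝ)*p1)/ρ) = ((1:ℝ)/2 * ((m:ℝ)*p1))/ρ by ring,
      show (3:ℝ)/2 * (((m:ℝ)*p1)/ρ) = ((3:ℝ)/2 * ((m:ℝ)*p1))/ρ by ring,
      show (1:ℝ)/2 * (((m:ℝ)*p0)/ρ) = ((1:ℝ)/2 * ((m:ℝ)*p0))/ρ by ring,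
      show (3:ℝ)/2 * (((m:ℝ)*p0)/ρ) = ((3:ℝ)/2 * ((m:ℝ)*p0))/ρ by ring,
      hdiv, hdiv, hdiv, hdiv]
  rw [hGset]
  set G := {M : Fin m → Fin d → Bool |
      (1:ℝ)/2 * ((m:ℝ)*p1) ≤ cnt m A1 M ∧ cnt m A1 M ≤ (3:ℝ)/2 * ((m:ℝ)*p1) ∧
      (1:ℝ)/2 * ((m:ℝ)*p0) ≤ cnt m A0 M ∧ cnt m A0 M ≤ (3:ℝ)/2 * ((m:ℝ)*p0)} with hG
  set B1l := {M : Fin m → Fin d → Bool | cnt m A1 M ≤ (1:ℝ)/2 * ((m:ℝ)*p1)} with hB1l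
  set B1u := {M : Fin m → Fin d → Bool | (3:ℝ)/2 * ((m:ℝ)*p1) ≤ cnt m A1 M} with hB1u
  set B0l := {M : Fin m → Fin d → Bool | cnt m A0 M ≤ (1:ℝ)/2 * ((m:ℝ)*p0)} with hB0l
  set B0u := {M : Fin m → Fin d → Bool | (3:ℝ)/2 * ((m:ℝ)*p0) ≤ cnt m A0 M} with hB0u
  have hsub : Gᶜ ⊆ B1l ∪ B1u ∪ B0l ∪ B0u := by
    intro M hM
    simp only [hG, Set.mem_compl_iff, Set.mem_setOf_eq, not_and_or, not_le] at hM
    simp only [Set.mem_union, hB1l, hB1u, hB0l, hB0u, Set.mem_setOf_eq]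
    rcases hM with h|h|h|h
    · exact Or.inl (Or.inl (Or.inl h.le))
    · exact Or.inl (Or.inl (Or.inr h.le))
    · exact Or.inl (Or.inr h.le)
    · exact Or.inr h.le
  have hmeas : ∀ B : Set (Fin m → Fin d → Bool), (MQ d s m hsd) B ≠ ⊤ :=
    fun B => measure_ne_top _ _
  have hunion : ((MQ d s m hsd) Gᶜ).toReal
      ≤ ((MQ d s m hsd) B1l).toReal + ((MQ d s m hsd) B1u).toReal
        + ((MQ d s m hsd) B0l).toReal + ((MQ d s m hsd) B0u).toReal := by
    have step : (MQ d s m hsd) Gᶜ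
        ≤ (MQ d s m hsd) B1l + (MQ d s m hsd) B1u + (MQ d s m hsd) B0l + (MQ d s m hsd) B0u := by
      calc (MQ d s m hsd) Gᶜ ≤ (MQ d s m hsd) (B1l ∪ B1u ∪ B0l ∪ B0u) := measure_mono hsub
        _ ≤ (MQ d s m hsd) (B1l ∪ B1u ∪ B0l) + (MQ d s m hsd) B0u := measure_union_le _ _
        _ ≤ ((MQ d s m hsd) (B1l ∪ B1u) + (MQ d s m hsd) B0l) + (MQ d s m hsd) B0u := by
            gcongr; exact measure_union_le _ _
        _ ≤ (((MQ d s m hsd) B1l + (MQ d s m hsd) B1u) + (MQ d s m hsd) B0l) + (MQ d s m hsd) B0u := by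
            gcongr; exact measure_union_le _ _
    calc ((MQ d s m hsd) Gᶜ).toReal
        ≤ ((MQ d s m hsd) B1l + (MQ d s m hsd) B1u + (MQ d s m hsd) B0l + (MQ d s m hsd) B0u).toReal :=
          ENNReal.toReal_mono (by
            refine ENNReal.add_ne_top.mpr ⟨ENNReal.add_ne_top.mpr ⟨ENNReal.add_ne_top.mpr ⟨?_, ?_⟩, ?_⟩, ?_⟩ <;>
              exact hmeas _) step
      _ = _ := by
          rw [ENNReal.toReal_add (ENNReal.add_ne_top.mpr ⟨ENNReal.add_ne_top.mpr ⟨hmeas _, hmeas _⟩, hmeas _⟩) (hmeas _),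
            ENNReal.toReal_add (ENNReal.add_ne_top.mpr ⟨hmeas _, hmeas _⟩) (hmeas _),
            ENNReal.toReal_add (hmeas _) (hmeas _)]
  have ht1l : ((MQ d s m hsd) B1l).toReal ≤ δ/4 :=
    (lower_tail d s m hsd A1).trans (hexp _ h1)
  have ht1u : ((MQ d s m hsd) B1u).toReal ≤ δ/4 :=
    (upper_tail d s m hsd A1).trans (hexp _ h1)
  have ht0l : ((MQ d s m hsd) B0l).toReal ≤ δ/4 :=
    (lower_tail d s m hsd A0).trans (hexp _ h0)
  have ht0u : ((MQ d s m hsd) B0u).toReal ≤ δ/4 :=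
    (upper_tail d s m hsd A0).trans (hexp _ h0)
  have hGmeas : MeasurableSet G := (Set.toFinite G).measurableSet
  have hcompl : ((MQ d s m hsd) G).toReal + ((MQ d s m hsd) Gᶜ).toReal = 1 := by
    rw [← ENNReal.toReal_add (hmeas _) (hmeas _), measure_add_measure_compl hGmeas,
      measure_univ, ENNReal.toReal_one]
  linarith
end
end
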